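/- Let A be a real m₁×n matrix, B a real m₂×n matrix, U an m₁×m₁ orthogonal matrix, V an m₂×m₂ orthogonal matrix, X an n×n invertible real matrix, and Σ_A (m₁×n), Σ_B (m₂×n) real matrices such that Uᵀ A X = Σ_A, Vᵀ B X = Σ_B, and Xᵀ (AᵀA + BᵀB) X = Iₙ. Then H := AᵀA + BᵀB is invertible, X⁻¹ = Xᵀ H, and H⁻¹ (AᵀA − BᵀB) = X (Σ_AᵀΣ_A − Σ_BᵀΣ_B) Xᵀ H. -/

import Mathlib

open Matrix

/-- The eigendecomposition `S = X (Σ_Aᵀ Σ_A − Σ_Bᵀ Σ_B) Xᵀ H` of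
`S = H⁻¹(AᵀA − BᵀB)`, `H = AᵀA + BᵀB`, induced by a GSVD of `(A, B)`. -/
theorem gsvd_eigendecomposition {m₁ m₂ n : ℕ}
    (A : Matrix (Fin m₁) (Fin n) ℝ) (B : Matrix (Fin m₂) (Fin n) ℝ)
    (U : Matrix (Fin m₁) (Fin m₁) ℝ) (V : Matrix (Fin m₂) (Fin m₂) ℝ)
    (X : Matrix (Fin n) (Fin n) ℝ)
    (SA : Matrix (Fin m₁) (Fin n) ℝ) (SB : Matrix (Fin m₂) (Fin n) ℝ)
    (hU : Uᵀ * U = 1) (hV : Vᵀ * V = 1) (hX : IsUnit X)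
    (hA : Uᵀ * A * X = SA) (hB : Vᵀ * B * X = SB)
    (hXHX : Xᵀ * (Aᵀ * A + Bᵀ * B) * X = 1) :
    IsUnit (Aᵀ * A + Bᵀ * B) ∧
    X⁻¹ = Xᵀ * (Aᵀ * A + Bᵀ * B) ∧
    (Aᵀ * A + Bᵀ * B)⁻¹ * (Aᵀ * A - Bᵀ * B) =
      X * (SAᵀ * SA - SBᵀ * SB) * Xᵀ * (Aᵀ * A + Bᵀ * B) := by
  set H := Aᵀ * A + Bᵀ * B with hHdef
  have hXdet : IsUnit X.det := (Matrix.isUnit_iff_isUnit_det X).mp hX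
  have hXTdet : IsUnit Xᵀ.det := by rwa [Matrix.det_transpose]
  -- invertibility of H
  have hdet : Xᵀ.det * H.det * X.det = 1 := by
    have := congrArg Matrix.det hXHX
    simpa [Matrix.det_mul] using this
  have hHdetUnit : IsUnit H.det :=
    IsUnit.of_mul_eq_one (X.det * Xᵀ.det) (by rw [← hdet]; ring)
  have hH : IsUnit H := (Matrix.isUnit_iff_isUnit_det H).mpr hHdetUnit
  -- X⁻¹ = Xᵀ H
  have hXinv : X⁻¹ = Xᵀ * H := by
    apply Matrix.inv_eq_left_inv
    rw [Matrix.mul_assoc] at hXHX ⊢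
    exact hXHX
  refine ⟨hH, hXinv, ?_⟩
  -- H⁻¹ = X Xᵀ
  have hXTinv : Xᵀ⁻¹ = H * X := by
    apply Matrix.inv_eq_right_inv
    rw [← Matrix.mul_assoc]
    exact hXHX
  have hHinv : H⁻¹ = X * Xᵀ := by
    apply Matrix.inv_eq_right_inv
    calc H * (X * Xᵀ) = (H * X) * Xᵀ := by rw [Matrix.mul_assoc]
      _ = Xᵀ⁻¹ * Xᵀ := by rw [hXTinv]
      _ = 1 := Matrix.nonsing_inv_mul _ hXTdet
  have hUU : U * Uᵀ = 1 := mul_eq_one_comm.mp hU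
  have hVV : V * Vᵀ = 1 := mul_eq_one_comm.mp hV
  have hSA : SAᵀ * SA = Xᵀ * (Aᵀ * A) * X := by
    rw [← hA]
    simp only [Matrix.transpose_mul, Matrix.transpose_transpose, Matrix.mul_assoc]
    rw [show U * (Uᵀ * (A * X)) = A * X by rw [← Matrix.mul_assoc, hUU, Matrix.one_mul]]
  have hSB : SBᵀ * SB = Xᵀ * (Bᵀ * B) * X := by
    rw [← hB]
    simp only [Matrix.transpose_mul, Matrix.transpose_transpose, Matrix.mul_assoc]
    rw [show V * (Vᵀ * (B * X)) = B * X by rw [← Matrix.mul_assoc, hVV, Matrix.one_mul]]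
  have hS : SAᵀ * SA - SBᵀ * SB = Xᵀ * (Aᵀ * A - Bᵀ * B) * X := by
    rw [hSA, hSB, Matrix.mul_sub, Matrix.sub_mul]
  rw [hS]
  have hHinvH : H⁻¹ * H = 1 := Matrix.nonsing_inv_mul _ hHdetUnit
  calc H⁻¹ * (Aᵀ * A - Bᵀ * B)
      = H⁻¹ * (Aᵀ * A - Bᵀ * B) * (H⁻¹ * H) := by rw [hHinvH, Matrix.mul_one]
    _ = X * (Xᵀ * (Aᵀ * A - Bᵀ * B) * X) * Xᵀ * H := by
        rw [hHinv]; simp only [Matrix.mul_assoc]
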